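/- Let (W,S) be a Coxeter system, K ⊆ S, and u ∈ W such that the parabolic decomposition u = u^K·u_K is a BP-decomposition, meaning supp(u^K) ∩ K ⊆ D_L(u_K). Then the multiplication map from ([e,u^K] ∩ W^K) × [e,u_K] to [e,u], sending (x,y) to xy, is an order-preserving bijection (with the product order on the domain). -/

import Mathlib

namespace Cox

variable {B : Type*} {W : Type*} [Group W] {M : CoxeterMatrix B} (cs : CoxeterSystem M W)

/-- One step of Bruhat order: right-multiply by a reflection, increasing length. -/
def lt1 (u v : W) : Prop :=
  (∃ t : W, cs.IsReflection t ∧ v = u * t) ∧ cs.length u < cs.length v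

/-- The (strong) Bruhat order on `W`. -/
def le (u v : W) : Prop := Relation.ReflTransGen (lt1 cs) u v

/-- The support of `w`: the simple reflections lying below `w` in Bruhat order
(equivalently, appearing in any reduced word for `w`). -/
def supp (w : W) : Set B := {i | le cs (cs.simple i) w}

/-- The standard parabolic subgroup generated by the simple reflections in `K`. -/
def parab (K : Set B) : Subgroup W := Subgroup.closure (cs.simple '' K)

/-- `x` belongs to the parabolic quotient `W^K`: no right descents in `K`. -/
def InQuot (K : Set B) (x : W) : Prop :=
  ∀ i ∈ K, cs.length x < cs.length (x * cs.simple i)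

/-- The left descent set of `v`. -/
def DescL (v : W) : Set B := {i | cs.length (cs.simple i * v) < cs.length v}

/-- `x` is the longest element of the standard parabolic subgroup `W_K`. -/
def IsLongest (K : Set B) (x : W) : Prop :=
  x ∈ parab cs K ∧ ∀ y ∈ parab cs K, cs.length y ≤ cs.length x

end Cox

open Cox

namespace BPAux
open CoxeterSystem List
open scoped Classical
set_option linter.unusedSectionVars false

variable {B : Type*} {W : Type*} [Group W] {M : CoxeterMatrix B} (cs : CoxeterSystem M W)

local prefix:100 "σ" => cs.simple
local prefix:100 "π" => cs.wordProd
local prefix:100 "ℓ" => cs.length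

/-- counting occurrences mod 2 -/
noncomputable def cnt (t : W) (l : List W) : ZMod 2 :=
  (l.map (fun r => if r = t then (1 : ZMod 2) else 0)).sum

@[simp] lemma cnt_nil (t : W) : cnt t ([] : List W) = 0 := rfl

lemma cnt_cons (t r : W) (l : List W) :
    cnt t (r :: l) = (if r = t then 1 else 0) + cnt t l := by
  simp [cnt]

lemma cnt_append (t : W) (l l' : List W) : cnt t (l ++ l') = cnt t l + cnt t l' := by
  simp [cnt]

lemma cnt_eq_zero_of_not_mem {t : W} {l : List W} (h : t ∉ l) : cnt t l = 0 := by
  induction l with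
  | nil => simp
  | cons r l ih =>
    have h1 : r ≠ t := fun hr => h (by rw [← hr]; exact mem_cons_self)
    have h2 : t ∉ l := fun hm => h (mem_cons_of_mem r hm)
    rw [cnt_cons, if_neg h1, ih h2, add_zero]

lemma mem_of_cnt_ne_zero {t : W} {l : List W} (h : cnt t l ≠ 0) : t ∈ l := by
  by_contra hm
  exact h (cnt_eq_zero_of_not_mem hm)

lemma cnt_self_append {t : W} (l : List W) : cnt t (l ++ l) = 0 := by
  rw [cnt_append, CharTwo.add_self_eq_zero]

/-- The basic involution used to define the reflection cocycle. -/
noncomputable def sigmaFun (i : B) : W × ZMod 2 → W × ZMod 2 :=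
  fun p => (σ i * p.1 * σ i, p.2 + if p.1 = σ i then 1 else 0)

lemma sigmaFun_involutive (i : B) : Function.Involutive (sigmaFun cs i) := by
  intro p
  unfold sigmaFun
  have h1 : σ i * (σ i * p.1 * σ i) * σ i = p.1 := by
    rw [show σ i * (σ i * p.1 * σ i) * σ i = (σ i * σ i) * p.1 * (σ i * σ i) by group,
      cs.simple_mul_simple_self]
    simp
  refine Prod.ext h1 ?_
  have h2 : (σ i * p.1 * σ i = σ i) ↔ (p.1 = σ i) := by
    constructor
    · intro h
      have h3 := congrArg (fun z => σ i * z * σ i) h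
      rw [show σ i * (σ i * p.1 * σ i) * σ i = (σ i * σ i) * p.1 * (σ i * σ i) by group,
        cs.simple_mul_simple_self, one_mul, mul_one] at h3
      simpa using h3
    · intro h; rw [h]
      rw [show σ i * σ i * σ i = (σ i * σ i) * σ i by group, cs.simple_mul_simple_self, one_mul]
  show p.2 + (if p.1 = σ i then 1 else 0) + (if σ i * p.1 * σ i = σ i then 1 else 0) = p.2
  rw [if_congr h2 (rfl) (rfl), add_assoc, CharTwo.add_self_eq_zero, add_zero]

/-- The permutation of `W × ZMod 2` associated to a simple reflection. -/
noncomputable def sigmaPerm (i : B) : Equiv.Perm (W × ZMod 2) :=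
  (sigmaFun_involutive cs i).toPerm

lemma sigmaPerm_apply (i : B) (p : W × ZMod 2) :
    sigmaPerm cs i p = (σ i * p.1 * σ i, p.2 + if p.1 = σ i then 1 else 0) := rfl

lemma prod_sigmaPerm_apply (ω : List B) (t : W) (ε : ZMod 2) :
    ((ω.map (sigmaPerm cs)).prod) (t, ε)
      = (π ω * t * (π ω)⁻¹, ε + cnt t (cs.rightInvSeq ω)) := by
  induction ω generalizing ε with
  | nil => simp [cnt]
  | cons i ω ih =>
    rw [List.map_cons, List.prod_cons, Equiv.Perm.mul_apply, ih, sigmaPerm_apply]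
    have hris : cs.rightInvSeq (i :: ω) = ((π ω)⁻¹ * σ i * π ω) :: cs.rightInvSeq ω := rfl
    rw [hris, cnt_cons]
    have hfst : σ i * (π ω * t * (π ω)⁻¹) * σ i = π (i :: ω) * t * (π (i :: ω))⁻¹ := by
      rw [cs.wordProd_cons, mul_inv_rev, cs.inv_simple]
      simp [mul_assoc]
    have hiff : (π ω * t * (π ω)⁻¹ = σ i) ↔ ((π ω)⁻¹ * σ i * π ω = t) := by
      constructor
      · intro h
        rw [← h]; simp [mul_assoc]
      · intro h
        rw [← h]; simp [mul_assoc]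
    refine Prod.ext hfst ?_
    show (ε + cnt t (cs.rightInvSeq ω)) + (if π ω * t * (π ω)⁻¹ = σ i then 1 else 0)
        = ε + ((if (π ω)⁻¹ * σ i * π ω = t then 1 else 0) + cnt t (cs.rightInvSeq ω))
    by_cases h : π ω * t * (π ω)⁻¹ = σ i
    · rw [if_pos h, if_pos (hiff.mp h)]; ring
    · rw [if_neg h, if_neg (fun hh => h (hiff.mpr hh))]; ring

lemma alt_drop (i j : B) : ∀ (n d : ℕ), d ≤ n →
    (alternatingWord i j n).drop d = alternatingWord i j (n - d) := by
  intro n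
  induction n with
  | zero => intro d hd; interval_cases d; simp
  | succ n ih =>
    intro d hd
    cases d with
    | zero => simp
    | succ d' =>
      rw [alternatingWord_succ' i j n, List.drop_succ_cons, ih d' (by omega)]
      congr 1
      omega

lemma alt_getElem? (i j : B) (n k : ℕ) (hk : k < n) :
    (alternatingWord i j n)[k]? = some (if Even (n - k - 1) then j else i) := by
  rw [← List.head?_drop, alt_drop i j n k (by omega)]
  have h1 : n - k = (n - k - 1) + 1 := by omega
  rw [h1, alternatingWord_succ' i j (n - k - 1)]
  simp

/-- the `q`-th member of the inversion sequence of a long alternating word, from the right -/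
def gf (i j : B) (q : ℕ) : W :=
  (π (alternatingWord i j q))⁻¹ * (if Even q then σ j else σ i) * π (alternatingWord i j q)

lemma gf_eq (i j : B) (q : ℕ) : gf cs i j q = σ j * (σ i * σ j) ^ q := by
  set a := σ i
  set b := σ j
  set r := a * b with hrdef
  have hbb : b * b = 1 := cs.simple_mul_simple_self j
  have haa : a * a = 1 := cs.simple_mul_simple_self i
  have hbinv : b⁻¹ = b := cs.inv_simple j
  have hrinv : r⁻¹ = b * a := by rw [hrdef, mul_inv_rev, cs.inv_simple, cs.inv_simple]
  have hbr : ∀ k : ℕ, b * r ^ k * b = (r ^ k)⁻¹ := by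
    intro k
    have h1 : b * r * b⁻¹ = r⁻¹ := by
      rw [hbinv, hrinv, hrdef]
      rw [show b * (a * b) * b = b * a * (b * b) by group, hbb, mul_one]
    calc b * r ^ k * b = b * r ^ k * b⁻¹ := by rw [hbinv]
      _ = (b * r * b⁻¹) ^ k := by rw [conj_pow]
      _ = (r⁻¹) ^ k := by rw [h1]
      _ = (r ^ k)⁻¹ := by rw [inv_pow]
  have conj_b : ∀ k : ℕ, (r ^ k)⁻¹ * b * r ^ k = b * r ^ (2 * k) := by
    intro k
    calc (r ^ k)⁻¹ * b * r ^ k = (b * r ^ k * b) * b * r ^ k := by rw [hbr k]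
      _ = b * r ^ k * (b * b) * r ^ k := by group
      _ = b * (r ^ k * r ^ k) := by rw [hbb]; group
      _ = b * r ^ (2 * k) := by rw [← pow_add]; congr 2; omega
  unfold gf
  rw [cs.prod_alternatingWord_eq_mul_pow i j q]
  rcases Nat.even_or_odd q with hq | hq
  · obtain ⟨k, hk⟩ := hq
    have hq2 : q / 2 = k := by omega
    rw [if_pos ⟨k, hk⟩, if_pos ⟨k, hk⟩, hq2, one_mul]
    rw [conj_b k]
    congr 1
    rw [hk]; congr 1; omega
  · obtain ⟨k, hk⟩ := hq
    have hodd : ¬ Even q := by rw [Nat.not_even_iff_odd]; exact ⟨k, hk⟩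
    have hq2 : q / 2 = k := by omega
    rw [if_neg hodd, if_neg hodd, hq2]
    have hbab : b * a * b = r⁻¹ * b := by rw [hrinv]
    calc (b * r ^ k)⁻¹ * a * (b * r ^ k)
        = (r ^ k)⁻¹ * (b⁻¹ * a * b) * r ^ k := by group
      _ = (r ^ k)⁻¹ * (r⁻¹ * b) * r ^ k := by rw [hbinv, hbab]
      _ = (r ^ (k+1))⁻¹ * b * r ^ (k+1) * r⁻¹ := by
            rw [pow_succ]
            group
      _ = b * r ^ (2 * (k+1)) * r⁻¹ := by rw [conj_b (k+1)]
      _ = b * r ^ q := by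
            rw [show (2 * (k+1)) = (2*k+1) + 1 by omega, pow_succ, hk]
            group

lemma ris_alt_getD (i j : B) (n k : ℕ) (hk : k < n) :
    (cs.rightInvSeq (alternatingWord i j n)).getD k 1 = gf cs i j (n - k - 1) := by
  rw [cs.getD_rightInvSeq]
  rw [alt_getElem? i j n k hk]
  rw [alt_drop i j n (k+1) (by omega)]
  rw [show n - (k+1) = n - k - 1 by omega]
  simp only [Option.map_some, Option.getD_some, gf, apply_ite cs.simple]

lemma ris_alt_double (i j : B) (m : ℕ) (hr : (σ i * σ j) ^ m = 1) :
    cs.rightInvSeq (alternatingWord i j (2 * m)) =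
      cs.rightInvSeq (alternatingWord i j m) ++ cs.rightInvSeq (alternatingWord i j m) := by
  have hlen : ∀ p : ℕ, (cs.rightInvSeq (alternatingWord i j p)).length = p := by
    intro p; rw [cs.length_rightInvSeq, length_alternatingWord]
  apply List.ext_getElem
  · simp only [List.length_append, hlen]; omega
  · intro k h1 h2
    rw [hlen] at h1
    have hgf : ∀ q : ℕ, gf cs i j (q + m) = gf cs i j q := by
      intro q
      rw [gf_eq, gf_eq, pow_add, hr, mul_one]
    have lhs_eq : (cs.rightInvSeq (alternatingWord i j (2 * m)))[k] = gf cs i j (2*m - k - 1) := by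
      rw [← List.getD_eq_getElem _ 1, ris_alt_getD cs i j (2*m) k h1]
    rcases Nat.lt_or_ge k m with hkm | hkm
    · rw [lhs_eq, List.getElem_append_left (by rw [hlen]; exact hkm),
        ← List.getD_eq_getElem _ 1, ris_alt_getD cs i j m k hkm]
      rw [show 2*m - k - 1 = (m - k - 1) + m by omega, hgf]
    · have hkm2 : k - m < m := by omega
      rw [lhs_eq, List.getElem_append_right (by rw [hlen]; exact hkm),
        ← List.getD_eq_getElem _ 1]
      rw [hlen, ris_alt_getD cs i j m (k - m) hkm2]
      congr 1
      omega

lemma prod_sigmaPerm_alt (i j : B) (n : ℕ) :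
    ((alternatingWord i j (2 * n)).map (sigmaPerm cs)).prod = (sigmaPerm cs i * sigmaPerm cs j) ^ n := by
  induction n with
  | zero => simp [alternatingWord]
  | succ n ih =>
    have h1 : 2 * (n + 1) = (2 * n + 1) + 1 := by omega
    rw [h1, alternatingWord_succ' i j (2*n+1), alternatingWord_succ' i j (2*n)]
    rw [if_neg (by rw [Nat.not_even_iff_odd]; exact ⟨n, rfl⟩), if_pos ⟨n, by omega⟩]
    rw [List.map_cons, List.map_cons, List.prod_cons, List.prod_cons, ih]
    rw [pow_succ']
    group

lemma sigma_liftable : M.IsLiftable (sigmaPerm cs) := by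
  intro i j
  have hr : (σ i * σ j) ^ M i j = 1 := cs.simple_mul_simple_pow i j
  rw [← prod_sigmaPerm_alt cs i j (M i j)]
  apply Equiv.ext
  rintro ⟨t, ε⟩
  rw [prod_sigmaPerm_apply]
  have hπ : π (alternatingWord i j (2 * M i j)) = 1 := by
    rw [cs.prod_alternatingWord_eq_mul_pow, if_pos ⟨M i j, by omega⟩, one_mul,
      show 2 * M i j / 2 = M i j by omega, hr]
  have hcnt : cnt t (cs.rightInvSeq (alternatingWord i j (2 * M i j))) = 0 := by
    rw [ris_alt_double cs i j (M i j) hr, cnt_self_append]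
  rw [hπ, hcnt, add_zero]
  simp

/-- The reflection cocycle homomorphism. -/
noncomputable def phi : W →* Equiv.Perm (W × ZMod 2) := cs.lift ⟨sigmaPerm cs, sigma_liftable cs⟩

lemma phi_simple (i : B) : phi cs (σ i) = sigmaPerm cs i := cs.lift_apply_simple (sigma_liftable cs) i

lemma phi_wordProd (ω : List B) : phi cs (π ω) = ((ω.map (sigmaPerm cs)).prod) := by
  unfold wordProd
  rw [MonoidHom.map_list_prod, List.map_map]
  congr 1
  apply List.map_congr_left
  intro i _
  exact phi_simple cs i

/-- The parity of the number of times `t` occurs in the right inversion sequence of (any word for) `w`. -/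
noncomputable def eta (w t : W) : ZMod 2 := ((phi cs w) (t, (0:ZMod 2))).2

lemma eta_wordProd (ω : List B) (t : W) : eta cs (π ω) t = cnt t (cs.rightInvSeq ω) := by
  unfold eta
  rw [phi_wordProd, prod_sigmaPerm_apply, zero_add]

lemma phi_apply (w t : W) (ε : ZMod 2) : phi cs w (t, ε) = (w * t * w⁻¹, ε + eta cs w t) := by
  obtain ⟨ω, rfl⟩ := cs.wordProd_surjective w
  rw [phi_wordProd, prod_sigmaPerm_apply, eta_wordProd]

lemma eta_mul (u v t : W) : eta cs (u * v) t = eta cs v t + eta cs u (v * t * v⁻¹) := by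
  unfold eta
  rw [map_mul, Equiv.Perm.mul_apply]
  simp [phi_apply]

lemma eta_simple (i : B) (t : W) : eta cs (σ i) t = if t = σ i then 1 else 0 := by
  unfold eta
  rw [phi_simple, sigmaPerm_apply]
  by_cases h : t = σ i
  · simp [h]
  · simp [h]

lemma eta_inv (v t : W) : eta cs v⁻¹ t = eta cs v (v⁻¹ * t * v) := by
  have h0 : eta cs 1 t = 0 := by
    have := eta_wordProd cs [] t
    simpa using this
  have := eta_mul cs v v⁻¹ t
  rw [mul_inv_cancel, h0, inv_inv] at this
  have h2 : ∀ x : ZMod 2, -x = x := by decide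
  have h4 : ∀ x y : ZMod 2, 0 = x + y → x = y := by decide
  exact h4 _ _ this

lemma eta_refl {t : W} (ht : cs.IsReflection t) : eta cs t t = 1 := by
  obtain ⟨w, i, rfl⟩ := ht
  have key : eta cs (w * (σ i * w⁻¹)) (w * σ i * w⁻¹) = 1 := by
    rw [eta_mul]
    have h3 : (σ i * w⁻¹) * (w * σ i * w⁻¹) * (σ i * w⁻¹)⁻¹ = σ i := by
      rw [mul_inv_rev, cs.inv_simple, inv_inv]
      rw [show σ i * w⁻¹ * (w * σ i * w⁻¹) * (w * σ i)
            = σ i * (w⁻¹ * w) * σ i * (w⁻¹ * w) * σ i by group]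
      rw [inv_mul_cancel, mul_one, mul_one]
      rw [show σ i * σ i * σ i = (σ i * σ i) * σ i from rfl, cs.simple_mul_simple_self, one_mul]
    rw [h3, eta_mul]
    have h5 : w⁻¹ * (w * σ i * w⁻¹) * w⁻¹⁻¹ = σ i := by group
    rw [h5, eta_simple, if_pos rfl]
    have h4 : eta cs w⁻¹ (w * σ i * w⁻¹) = eta cs w (σ i) := by
      rw [eta_inv]
      congr 1
      group
    rw [h4]
    exact (by decide : ∀ x : ZMod 2, (x + 1) + x = 1) _
  rwa [← mul_assoc] at key

lemma eta_eq_one_iff {w t : W} (ht : cs.IsReflection t) :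
    eta cs w t = 1 ↔ ℓ (w * t) < ℓ w := by
  have fwd : ∀ w' : W, eta cs w' t = 1 → ℓ (w' * t) < ℓ w' := by
    intro w' h
    obtain ⟨ω, hred, rfl⟩ := cs.exists_reduced_word' w'
    rw [eta_wordProd] at h
    have hmem : t ∈ cs.rightInvSeq ω := mem_of_cnt_ne_zero (by rw [h]; decide)
    exact (cs.isRightInversion_of_mem_rightInvSeq hred hmem).2
  constructor
  · exact fwd w
  · intro h
    by_contra hne
    have h0 : eta cs w t = 0 := (by decide : ∀ x : ZMod 2, x ≠ 1 → x = 0) _ hne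
    have h1 : eta cs (w * t) t = 1 := by
      rw [eta_mul, eta_refl cs ht]
      have htt : t * t * t⁻¹ = t := by rw [ht.mul_self, one_mul, ht.inv]
      rw [htt, h0, add_zero]
    have h2 := fwd (w * t) h1
    rw [mul_assoc, ht.mul_self, mul_one] at h2
    omega

theorem strong_exchange {t : W} (ht : cs.IsReflection t) {ω : List B}
    (hl : ℓ (π ω * t) < ℓ (π ω)) :
    ∃ k, k < ω.length ∧ π ω * t = π (ω.eraseIdx k) := by
  have h1 : eta cs (π ω) t = 1 := (eta_eq_one_iff cs ht).mpr hl
  rw [eta_wordProd] at h1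
  have hmem : t ∈ cs.rightInvSeq ω := mem_of_cnt_ne_zero (by rw [h1]; decide)
  obtain ⟨k, hk, hkt⟩ := List.mem_iff_getElem.mp hmem
  rw [← List.getD_eq_getElem _ 1 hk] at hkt
  refine ⟨k, by rw [← cs.length_rightInvSeq ω]; exact hk, ?_⟩
  rw [← hkt, cs.wordProd_mul_getD_rightInvSeq]

lemma deletion_aux : ∀ (n : ℕ) (ω : List B), ω.length ≤ n →
    ∃ ω', ω' <+ ω ∧ cs.IsReduced ω' ∧ π ω' = π ω := by
  intro n
  induction n with
  | zero =>
    intro ω hω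
    rw [Nat.le_zero, List.length_eq_zero_iff] at hω
    exact ⟨[], by simp [hω], by simp [CoxeterSystem.IsReduced], by simp [hω]⟩
  | succ n ih =>
    intro ω hω
    by_cases hred : cs.IsReduced ω
    · exact ⟨ω, List.Sublist.refl ω, hred, rfl⟩
    · have hne : ω ≠ [] := by rintro rfl; exact hred (by simp [CoxeterSystem.IsReduced])
      have hlen1 : 1 ≤ ω.length := by
        cases ω with
        | nil => exact absurd rfl hne
        | cons a l => simp
      have hex : ∃ j, ¬ cs.IsReduced (ω.take (j+1)) := by
        refine ⟨ω.length - 1, ?_⟩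
        rw [show ω.length - 1 + 1 = ω.length by omega, List.take_length]
        exact hred
      let j := Nat.find hex
      have hj : ¬ cs.IsReduced (ω.take (j+1)) := Nat.find_spec hex
      have hmin : ∀ k, k < j → cs.IsReduced (ω.take (k+1)) := by
        intro k hk
        by_contra hc
        have h2 := Nat.find_min' hex hc
        omega
      have hjlt : j < ω.length := by
        have : j ≤ ω.length - 1 := Nat.find_min' hex (by
          rw [show ω.length - 1 + 1 = ω.length by omega, List.take_length]; exact hred)
        omega
      have hredtj : cs.IsReduced (ω.take j) := by
        rcases Nat.eq_zero_or_pos j with h0 | h0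
        · rw [h0]; simp [CoxeterSystem.IsReduced]
        · have h3 := hmin (j-1) (by omega)
          rwa [show j - 1 + 1 = j by omega] at h3
      have hlentj : (ω.take j).length = j := by
        rw [List.length_take]; omega
      have htake : ω.take (j+1) = ω.take j ++ [ω[j]] := by
        rw [List.take_succ]
        congr 1
        rw [List.getElem?_eq_getElem hjlt]
        rfl
      have hπtake : π (ω.take (j+1)) = π (ω.take j) * σ (ω[j]) := by
        rw [htake, cs.wordProd_append, cs.wordProd_singleton]
      have h1 : ℓ (π (ω.take j)) = j := hredtj.trans hlentj
      have hlt : ℓ (π (ω.take j) * σ (ω[j])) < ℓ (π (ω.take j)) := by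
        have hlen2 : (ω.take (j+1)).length = j + 1 := by rw [List.length_take]; omega
        have hne2 : ℓ (π (ω.take j) * σ (ω[j])) ≠ j + 1 := by
          intro hc
          apply hj
          show ℓ (π (ω.take (j+1))) = _
          rw [hπtake, hc, hlen2]
        rcases cs.length_mul_simple (π (ω.take j)) (ω[j]) with hcase | hcase
        · rw [h1] at hcase; exact absurd hcase hne2
        · rw [h1] at hcase; omega
      obtain ⟨k, hk, hkeq⟩ := strong_exchange cs (cs.isReflection_simple (ω[j])) hlt
      have hdecomp : ω = ω.take j ++ (ω[j] :: ω.drop (j+1)) := by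
        conv_lhs => rw [← List.take_append_drop j ω]
        rw [List.drop_eq_getElem_cons hjlt]
      have hπω : π ω = π ((ω.take j).eraseIdx k ++ ω.drop (j+1)) := by
        conv_lhs => rw [hdecomp]
        rw [cs.wordProd_append, cs.wordProd_append, cs.wordProd_cons, ← mul_assoc, ← hkeq]
      have hsub : (ω.take j).eraseIdx k ++ ω.drop (j+1) <+ ω := by
        conv_rhs => rw [hdecomp]
        exact List.Sublist.append (List.eraseIdx_sublist _ k)
          (List.sublist_cons_self _ _)
      have hshort : ((ω.take j).eraseIdx k ++ ω.drop (j+1)).length ≤ n := by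
        have e1 : ((ω.take j).eraseIdx k).length + 1 = (ω.take j).length :=
          List.length_eraseIdx_add_one hk
        rw [List.length_append, List.length_drop]
        rw [hlentj] at e1
        omega
      obtain ⟨ω', hsub', hred', heq'⟩ := ih _ hshort
      exact ⟨ω', hsub'.trans hsub, hred', heq'.trans hπω.symm⟩


/-! ### Bruhat order basics -/

lemma le_rfl' (w : W) : le cs w w := Relation.ReflTransGen.refl

lemma le_step_right {u t : W} (ht : cs.IsReflection t) (h : ℓ u < ℓ (u * t)) :
    le cs u (u * t) :=
  Relation.ReflTransGen.single ⟨⟨t, ht, rfl⟩, h⟩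

lemma le_of_mul_simple_lt {w : W} {i : B} (h : ℓ (w * σ i) < ℓ w) : le cs (w * σ i) w := by
  have he : w = (w * σ i) * σ i := by rw [mul_assoc, cs.simple_mul_simple_self, mul_one]
  have := le_step_right cs (cs.isReflection_simple i) (t := σ i) (u := w * σ i)
    (by rw [← he]; exact h)
  rwa [← he] at this

lemma le_mul_simple_of_lt {w : W} {i : B} (h : ℓ w < ℓ (w * σ i)) : le cs w (w * σ i) :=
  le_step_right cs (cs.isReflection_simple i) h

lemma le_simple_mul_left_asc {w : W} {i : B} (h : ℓ w < ℓ (σ i * w)) : le cs w (σ i * w) := by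
  have ht : cs.IsReflection (w⁻¹ * σ i * w) := by
    have h2 := (cs.isReflection_simple i).conj w⁻¹
    rwa [inv_inv] at h2
  have he : w * (w⁻¹ * σ i * w) = σ i * w := by group
  have h3 := le_step_right cs ht (by rw [he]; exact h)
  rwa [he] at h3

lemma le_simple_mul_left_desc {w : W} {i : B} (h : ℓ (σ i * w) < ℓ w) : le cs (σ i * w) w := by
  have ht : cs.IsReflection (w⁻¹ * σ i * w) := by
    have h2 := (cs.isReflection_simple i).conj w⁻¹
    rwa [inv_inv] at h2
  have he : (σ i * w) * (w⁻¹ * σ i * w) = w := by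
    rw [show σ i * w * (w⁻¹ * σ i * w) = σ i * (w * w⁻¹) * σ i * w by group]
    rw [mul_inv_cancel, mul_one]
    rw [show σ i * σ i * w = (σ i * σ i) * w from rfl, cs.simple_mul_simple_self, one_mul]
  have h3 := le_step_right cs ht (u := σ i * w) (by rw [he]; exact h)
  rwa [he] at h3

lemma length_le_of_le {u v : W} (h : le cs u v) : ℓ u ≤ ℓ v := by
  induction h with
  | refl => exact Nat.le_refl _
  | tail h1 h2 ih => exact ih.trans (Nat.le_of_lt h2.2)

lemma simple_descent_exchange {z w : W} {i : B} {t : W} (ht : cs.IsReflection t)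
    (hw : w = z * t) (hzw : ℓ z < ℓ w) (hdesc : ℓ (σ i * w) < ℓ w)
    (hz : ℓ z < ℓ (σ i * z)) (hzt : ℓ (σ i * w) < ℓ (σ i * z)) : σ i * z = w := by
  have e1 : ℓ (σ i * w) + 1 = ℓ w := by have := cs.length_simple_mul w i; omega
  have e2 : ℓ (σ i * z) = ℓ z + 1 := by have := cs.length_simple_mul z i; omega
  have e3 : ℓ w = ℓ z + 1 := by omega
  obtain ⟨ω', hred', heq'⟩ := cs.exists_reduced_word' (σ i * w)
  have hπ : π (i :: ω') = w := by
    rw [cs.wordProd_cons, ← heq']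
    rw [show σ i * (σ i * w) = (σ i * σ i) * w by group, cs.simple_mul_simple_self, one_mul]
  have hlω' : ω'.length = ℓ (σ i * w) := by rw [heq']; exact hred'.symm
  have hwt : ℓ (π (i :: ω') * t) < ℓ (π (i :: ω')) := by
    rw [hπ, show w * t = z by rw [hw, mul_assoc, ht.mul_self, mul_one]]
    omega
  obtain ⟨k, hk, hkeq⟩ := strong_exchange cs ht hwt
  rw [hπ] at hkeq
  have hwtz : w * t = z := by rw [hw, mul_assoc, ht.mul_self, mul_one]
  cases k with
  | zero =>
    rw [List.eraseIdx_cons_zero, hwtz] at hkeq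
    rw [hkeq, ← heq']
    rw [show σ i * (σ i * w) = (σ i * σ i) * w by group, cs.simple_mul_simple_self, one_mul]
  | succ k' =>
    exfalso
    rw [List.eraseIdx_cons_succ, cs.wordProd_cons, hwtz] at hkeq
    have h4 : σ i * z = π (ω'.eraseIdx k') := by
      rw [hkeq]
      rw [show σ i * (σ i * π (ω'.eraseIdx k')) = (σ i * σ i) * π (ω'.eraseIdx k') by group,
        cs.simple_mul_simple_self, one_mul]
    have h5 : ℓ (σ i * z) ≤ (ω'.eraseIdx k').length := by
      rw [h4]; exact cs.length_wordProd_le _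
    have h6 : (ω'.eraseIdx k').length + 1 = ω'.length := by
      apply List.length_eraseIdx_add_one
      have := hk
      simp only [List.length_cons] at this
      omega
    omega

lemma lifting : ∀ (n : ℕ) (w : W), ℓ w = n → ∀ (i : B) (v : W), le cs v w →
    ((ℓ w < ℓ (σ i * w)) → le cs (σ i * v) (σ i * w)) ∧
    ((ℓ (σ i * w) < ℓ w) → ℓ v < ℓ (σ i * v) → le cs (σ i * v) w) := by
  intro n
  induction n using Nat.strong_induction_on with
  | _ n IH =>
  intro w hw i v hvw
  rcases Relation.ReflTransGen.cases_tail hvw with heq | ⟨z, hvz, hzw⟩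
  · subst heq
    constructor
    · intro _; exact le_rfl' cs _
    · intro h1 h2; omega
  · obtain ⟨⟨t, ht, hwzt⟩, hlz⟩ := hzw
    subst hwzt
    subst hw
    constructor
    · intro hasc
      by_cases hv : ℓ v < ℓ (σ i * v)
      · by_cases hz : ℓ z < ℓ (σ i * z)
        · have h1 := ((IH (ℓ z) (by omega) z rfl i v hvz).1) hz
          have e1 : ℓ (σ i * z) ≤ ℓ z + 1 := by
            rcases cs.length_simple_mul z i with h | h <;> omega
          have hstep : le cs (σ i * z) (σ i * (z * t)) := by
            have he : σ i * (z * t) = (σ i * z) * t := by rw [mul_assoc]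
            rw [he]
            exact le_step_right cs ht (by rw [← he]; omega)
          exact h1.trans hstep
        · have hz' : ℓ (σ i * z) < ℓ z := by
            have := cs.length_simple_mul_ne z i; omega
          have h1 := ((IH (ℓ z) (by omega) z rfl i v hvz).2) hz' hv
          exact (h1.trans (le_step_right cs ht hlz)).trans (le_simple_mul_left_asc cs hasc)
      · have hv' : ℓ (σ i * v) < ℓ v := by have := cs.length_simple_mul_ne v i; omega
        exact ((le_simple_mul_left_desc cs hv').trans hvw).trans (le_simple_mul_left_asc cs hasc)
    · intro hdesc hv
      by_cases hz : ℓ (σ i * z) < ℓ z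
      · have h1 := ((IH (ℓ z) (by omega) z rfl i v hvz).2) hz hv
        exact h1.trans (le_step_right cs ht hlz)
      · have hz' : ℓ z < ℓ (σ i * z) := by have := cs.length_simple_mul_ne z i; omega
        have h1 := ((IH (ℓ z) (by omega) z rfl i v hvz).1) hz'
        have h2 : le cs (σ i * z) (z * t) := by
          by_cases hzt : ℓ (σ i * z) < ℓ ((σ i * z) * t)
          · have hstep := le_step_right cs ht hzt
            have he : (σ i * z) * t = σ i * (z * t) := by rw [mul_assoc]
            rw [he] at hstep
            exact hstep.trans (le_simple_mul_left_desc cs hdesc)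
          · have hne := ht.length_mul_left_ne (σ i * z)
            have hzt' : ℓ (σ i * (z * t)) < ℓ (σ i * z) := by
              rw [← mul_assoc]; omega
            have := simple_descent_exchange cs ht (rfl : z * t = z * t) hlz hdesc hz' hzt'
            rw [this]
            exact le_rfl' cs _
        exact h1.trans h2

lemma subword_of_le {v w : W} (h : le cs v w) :
    ∀ ω : List B, cs.IsReduced ω → π ω = w →
    ∃ ω', ω' <+ ω ∧ cs.IsReduced ω' ∧ π ω' = v := by
  induction h with
  | refl => exact fun ω hred hπ => ⟨ω, List.Sublist.refl _, hred, hπ⟩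
  | @tail z w' hvz hzw ih =>
    intro ω hred hπ
    obtain ⟨⟨t, ht, hw't⟩, hlz⟩ := hzw
    have hzwt : π ω * t = z := by
      rw [hπ, hw't, mul_assoc, ht.mul_self, mul_one]
    have hlt : ℓ (π ω * t) < ℓ (π ω) := by rw [hzwt, hπ]; omega
    obtain ⟨k, hk, hkeq⟩ := strong_exchange cs ht hlt
    obtain ⟨ω₁, hsub₁, hred₁, heq₁⟩ := deletion_aux cs (ω.eraseIdx k).length _ (Nat.le_refl _)
    obtain ⟨ω', hsub', hred', heq'⟩ := ih ω₁ hred₁ (by rw [heq₁, ← hkeq, hzwt])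
    exact ⟨ω', (hsub'.trans hsub₁).trans (List.eraseIdx_sublist ω k), hred', heq'⟩

lemma isReduced_of_cons {i : B} {ω₁ : List B} (hred : cs.IsReduced (i :: ω₁)) :
    cs.IsReduced ω₁ ∧ ℓ (π ω₁) < ℓ (σ i * π ω₁) := by
  have h1 : ℓ (σ i * π ω₁) = ω₁.length + 1 := by
    have := hred
    rw [CoxeterSystem.IsReduced, cs.wordProd_cons] at this
    simpa using this
  have h2 := cs.length_simple_mul (π ω₁) i
  have h3 := cs.length_wordProd_le ω₁
  constructor
  · show ℓ (π ω₁) = ω₁.length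
    omega
  · omega

lemma le_of_subword : ∀ (ω ω' : List B), cs.IsReduced ω → ω' <+ ω → le cs (π ω') (π ω) := by
  intro ω
  induction ω with
  | nil =>
    intro ω' _ hsub
    rw [List.sublist_nil.mp hsub]
    exact le_rfl' cs _
  | cons i ω₁ ih =>
    intro ω' hred hsub
    obtain ⟨hred₁, hasc⟩ := isReduced_of_cons cs hred
    cases hsub with
    | cons _ hs =>
      exact ((ih ω' hred₁ hs).trans (le_simple_mul_left_asc cs hasc)).trans
        (by rw [cs.wordProd_cons])
    | cons_cons _ hs =>
      rw [cs.wordProd_cons, cs.wordProd_cons]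
      exact (lifting cs (ℓ (π ω₁)) _ rfl i (π _) (ih _ hred₁ hs)).1 hasc

/-! ### Parabolic subgroups -/

lemma wordProd_mem_parab {K : Set B} {ω : List B} (hω : ∀ i ∈ ω, i ∈ K) :
    π ω ∈ parab cs K := by
  induction ω with
  | nil => rw [cs.wordProd_nil]; exact one_mem _
  | cons i ω ih =>
    rw [cs.wordProd_cons]
    exact mul_mem (Subgroup.subset_closure ⟨i, hω i List.mem_cons_self, rfl⟩)
      (ih fun j hj => hω j (List.mem_cons_of_mem i hj))

lemma exists_reduced_word_of_mem_parab {K : Set B} {w : W} (hw : w ∈ parab cs K) :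
    ∃ ω, (∀ i ∈ ω, i ∈ K) ∧ cs.IsReduced ω ∧ π ω = w := by
  induction hw using Subgroup.closure_induction with
  | mem z hz =>
    obtain ⟨i, hiK, rfl⟩ := hz
    exact ⟨[i], by simpa using hiK, by simp [CoxeterSystem.IsReduced], by simp⟩
  | one => exact ⟨[], by simp, by simp [CoxeterSystem.IsReduced], by simp⟩
  | mul z z' hz hz' ihz ihz' =>
    obtain ⟨ω₁, hK₁, _, he₁⟩ := ihz
    obtain ⟨ω₂, hK₂, _, he₂⟩ := ihz'
    obtain ⟨ω', hsub, hred, heq⟩ := deletion_aux cs (ω₁ ++ ω₂).length (ω₁ ++ ω₂) (Nat.le_refl _)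
    refine ⟨ω', ?_, hred, ?_⟩
    · intro i hi
      rcases List.mem_append.mp (hsub.subset hi) with h | h
      · exact hK₁ i h
      · exact hK₂ i h
    · rw [heq, cs.wordProd_append, he₁, he₂]
  | inv z hz ihz =>
    obtain ⟨ω₁, hK₁, hred₁, he₁⟩ := ihz
    refine ⟨ω₁.reverse, fun i hi => hK₁ i (List.mem_reverse.mp hi), ?_, ?_⟩
    · rwa [cs.isReduced_reverse_iff]
    · rw [cs.wordProd_reverse, he₁]

lemma exists_min_coset_rep (K : Set B) (w : W) :
    ∃ d, d ∈ parab cs K ∧ ∀ d' ∈ parab cs K, ℓ (w * d) ≤ ℓ (w * d') := by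
  classical
  have hne : ∃ n, ∃ d ∈ parab cs K, ℓ (w * d) = n := ⟨ℓ (w * 1), 1, one_mem _, rfl⟩
  obtain ⟨d, hd, hdn⟩ := Nat.find_spec hne
  refine ⟨d, hd, fun d' hd' => ?_⟩
  rw [hdn]
  exact Nat.find_min' hne ⟨d', hd', rfl⟩

lemma min_rep_additive {K : Set B} {u : W} (hu : ∀ d ∈ parab cs K, ℓ u ≤ ℓ (u * d)) :
    ∀ (n : ℕ) (v : W), v ∈ parab cs K → ℓ v = n → ℓ (u * v) = ℓ u + ℓ v := by
  intro n
  induction n using Nat.strong_induction_on with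
  | _ n IH =>
  intro v hv hvn
  obtain ⟨ωv, hωvK, hωvred, hωveq⟩ := exists_reduced_word_of_mem_parab cs hv
  rcases List.eq_nil_or_concat ωv with rfl | ⟨ω₀, j, rfl⟩
  · rw [cs.wordProd_nil] at hωveq
    rw [← hωveq]
    simp
  · -- v = π ω₀ * σ j
    have hveq : v = π ω₀ * σ j := by rw [← hωveq, cs.wordProd_concat]
    have hlv : ℓ v = ω₀.length + 1 := by
      rw [← hωveq, hωvred]
      simp [List.concat_eq_append]
    have hred₀ : cs.IsReduced ω₀ := by
      have h1 : ℓ (π ω₀ * σ j) = ω₀.length + 1 := by rw [← hveq]; exact hlv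
      have h2 := cs.length_mul_simple (π ω₀) j
      have h3 := cs.length_wordProd_le ω₀
      show ℓ (π ω₀) = ω₀.length
      omega
    have hω₀K : ∀ i ∈ ω₀, i ∈ K := fun i hi => hωvK i (by simp [List.concat_eq_append, hi])
    have hjK : j ∈ K := hωvK j (by simp [List.concat_eq_append])
    have hv₀ : π ω₀ ∈ parab cs K := wordProd_mem_parab cs hω₀K
    have hlv₀ : ℓ (π ω₀) = ω₀.length := hred₀
    have hIH : ℓ (u * π ω₀) = ℓ u + ω₀.length := by
      have := IH ω₀.length (by omega) (π ω₀) hv₀ hlv₀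
      omega
    -- now show the last letter increases length
    have hkey : ℓ (u * π ω₀ * σ j) = ℓ (u * π ω₀) + 1 := by
      rcases cs.length_mul_simple (u * π ω₀) j with hcase | hcase
      · exact hcase
      · exfalso
        -- descent: exchange
        obtain ⟨ωu, hredu, hequ⟩ := cs.exists_reduced_word' u
        have hπuv : π (ωu ++ ω₀) = u * π ω₀ := by rw [cs.wordProd_append, ← hequ]
        have hreduv : cs.IsReduced (ωu ++ ω₀) := by
          show ℓ (π (ωu ++ ω₀)) = _
          rw [hπuv, hIH, List.length_append, hequ, hredu]
        have hlt : ℓ (π (ωu ++ ω₀) * σ j) < ℓ (π (ωu ++ ω₀)) := by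
          rw [hπuv]; omega
        obtain ⟨k, hk, hkeq⟩ := strong_exchange cs (cs.isReflection_simple j) hlt
        rw [hπuv] at hkeq
        rcases Nat.lt_or_ge k ωu.length with hkc | hkc
        · rw [List.eraseIdx_append_of_lt_length hkc] at hkeq
          rw [cs.wordProd_append] at hkeq
          have h5 : u * (π ω₀ * σ j * (π ω₀)⁻¹) = π (ωu.eraseIdx k) := by
            rw [show u * (π ω₀ * σ j * (π ω₀)⁻¹) = (u * π ω₀ * σ j) * (π ω₀)⁻¹ by group, hkeq]
            group
          have h6 : π ω₀ * σ j * (π ω₀)⁻¹ ∈ parab cs K :=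
            mul_mem (mul_mem hv₀ (Subgroup.subset_closure ⟨j, hjK, rfl⟩)) (inv_mem hv₀)
          have h7 := hu _ h6
          rw [h5] at h7
          have h8 := cs.length_wordProd_le (ωu.eraseIdx k)
          have h9 : (ωu.eraseIdx k).length + 1 = ωu.length := List.length_eraseIdx_add_one hkc
          have h10 : ℓ u = ωu.length := by rw [hequ, hredu]
          omega
        · rw [List.eraseIdx_append_of_length_le hkc] at hkeq
          rw [cs.wordProd_append] at hkeq
          have hkeq' : u * (π ω₀ * σ j) = u * π (ω₀.eraseIdx (k - ωu.length)) := by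
            rw [← mul_assoc, hkeq, ← hequ]
          have h5 : π ω₀ * σ j = π (ω₀.eraseIdx (k - ωu.length)) := mul_left_cancel hkeq'
          have h6 : ℓ (π ω₀ * σ j) ≤ (ω₀.eraseIdx (k - ωu.length)).length := by
            rw [h5]; exact cs.length_wordProd_le _
          have h7 : (ω₀.eraseIdx (k - ωu.length)).length ≤ ω₀.length := by
            rw [List.length_eraseIdx]
            split <;> omega
          rw [← hveq] at h6
          omega
    rw [hveq, ← mul_assoc, hkey, hIH, ← hveq, hlv]
    omega

lemma inQuot_of_min {K : Set B} {u : W} (hu : ∀ d ∈ parab cs K, ℓ u ≤ ℓ (u * d)) :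
    InQuot cs K u := by
  intro i hi
  have h1 : σ i ∈ parab cs K := Subgroup.subset_closure ⟨i, hi, rfl⟩
  have h2 := min_rep_additive cs hu (ℓ (σ i)) (σ i) h1 rfl
  rw [cs.length_simple] at h2
  omega

lemma parab_mul_simple_lt {K : Set B} {d : W} (hd : d ∈ parab cs K) (hne : d ≠ 1) :
    ∃ j ∈ K, d * σ j ∈ parab cs K ∧ ℓ (d * σ j) < ℓ d := by
  obtain ⟨ω, hK, hred, heq⟩ := exists_reduced_word_of_mem_parab cs hd
  rcases List.eq_nil_or_concat ω with rfl | ⟨ω₀, j, rfl⟩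
  · exact absurd (by rw [← heq, cs.wordProd_nil] : d = 1) hne
  · have hdeq : d * σ j = π ω₀ := by
      rw [← heq, cs.wordProd_concat, mul_assoc, cs.simple_mul_simple_self, mul_one]
    refine ⟨j, hK j (by simp [List.concat_eq_append]), ?_, ?_⟩
    · rw [hdeq]
      exact wordProd_mem_parab cs (fun i hi => hK i (by simp [List.concat_eq_append, hi]))
    · rw [hdeq]
      have h1 := cs.length_wordProd_le ω₀
      have h2 : ℓ d = ω₀.length + 1 := by
        rw [← heq, hred]
        simp [List.concat_eq_append]
      omega

lemma eq_one_of_quot_rep {K : Set B} {u d : W}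
    (hu : ∀ d' ∈ parab cs K, ℓ u ≤ ℓ (u * d')) (hd : d ∈ parab cs K)
    (hq : InQuot cs K (u * d)) : d = 1 := by
  by_contra hne
  obtain ⟨j, hjK, hdj, hlt⟩ := parab_mul_simple_lt cs hd hne
  have h1 := min_rep_additive cs hu (ℓ d) d hd rfl
  have h2 := min_rep_additive cs hu (ℓ (d * σ j)) (d * σ j) hdj rfl
  have h3 := hq j hjK
  rw [mul_assoc] at h3
  omega

lemma min_of_inQuot {K : Set B} {a : W} (ha : InQuot cs K a) :
    ∀ d ∈ parab cs K, ℓ a ≤ ℓ (a * d) := by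
  obtain ⟨d₀, hd₀, hmin⟩ := exists_min_coset_rep cs K a
  have humin : ∀ d' ∈ parab cs K, ℓ (a * d₀) ≤ ℓ ((a * d₀) * d') := by
    intro d' hd'
    rw [mul_assoc]
    exact hmin (d₀ * d') (mul_mem hd₀ hd')
  have hq : InQuot cs K ((a * d₀) * d₀⁻¹) := by
    rw [mul_assoc, mul_inv_cancel, mul_one]; exact ha
  have h1 := eq_one_of_quot_rep cs humin (inv_mem hd₀) hq
  have hd₀1 : d₀ = 1 := by rw [← inv_inv d₀, h1, inv_one]
  intro d hd
  have h2 := hmin d hd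
  rwa [hd₀1, mul_one] at h2

lemma length_quot_add {K : Set B} {a b : W} (ha : InQuot cs K a) (hb : b ∈ parab cs K) :
    ℓ (a * b) = ℓ a + ℓ b :=
  min_rep_additive cs (min_of_inQuot cs ha) (ℓ b) b hb rfl

lemma quot_unique {K : Set B} {a a' b b' : W} (ha : InQuot cs K a) (ha' : InQuot cs K a')
    (hb : b ∈ parab cs K) (hb' : b' ∈ parab cs K) (heq : a * b = a' * b') :
    a = a' ∧ b = b' := by
  have hd : b * b'⁻¹ ∈ parab cs K := mul_mem hb (inv_mem hb')
  have h1 : a * (b * b'⁻¹) = a' := by rw [← mul_assoc, heq, mul_assoc, mul_inv_cancel, mul_one]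
  have h2 : InQuot cs K (a * (b * b'⁻¹)) := by rw [h1]; exact ha'
  have h3 := eq_one_of_quot_rep cs (min_of_inQuot cs ha) hd h2
  rw [mul_inv_eq_one] at h3
  constructor
  · rw [h3, mul_inv_cancel, mul_one] at h1
    exact h1
  · exact h3

lemma mem_parab_of_le {K : Set B} {b y : W} (hy : y ∈ parab cs K) (hb : le cs b y) :
    b ∈ parab cs K := by
  obtain ⟨ωy, hK, hred, heq⟩ := exists_reduced_word_of_mem_parab cs hy
  obtain ⟨ω', hsub, hred', heq'⟩ := subword_of_le cs hb ωy hred heq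
  rw [← heq']
  exact wordProd_mem_parab cs (fun i hi => hK i (hsub.subset hi))

lemma simple_le_of_right_descent {a : W} {j : B} (h : ℓ (a * σ j) < ℓ a) :
    le cs (σ j) a := by
  obtain ⟨ω₁, hred₁, heq₁⟩ := cs.exists_reduced_word' (a * σ j)
  have ha : a = π (ω₁ ++ [j]) := by
    rw [cs.wordProd_append, cs.wordProd_singleton, ← heq₁, mul_assoc,
      cs.simple_mul_simple_self, mul_one]
  have hlen : ℓ (a * σ j) + 1 = ℓ a := by have := cs.length_mul_simple a j; omega
  have hl₁ : ω₁.length = ℓ (a * σ j) := by rw [heq₁]; exact hred₁.symm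
  have hred : cs.IsReduced (ω₁ ++ [j]) := by
    show ℓ (π (ω₁ ++ [j])) = (ω₁ ++ [j]).length
    rw [← ha, List.length_append, List.length_singleton]
    omega
  have h2 := le_of_subword cs (ω₁ ++ [j]) [j] hred (List.sublist_append_right ω₁ [j])
  rwa [cs.wordProd_singleton, ← ha] at h2

lemma mul_le_mul_aux {K : Set B} {x y a b : W} (hx : InQuot cs K x) (hy : y ∈ parab cs K)
    (ha : le cs a x) (hb : le cs b y) : le cs (a * b) (x * y) := by
  obtain ⟨ωx, hredx, heqx⟩ := cs.exists_reduced_word' x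
  obtain ⟨ωy, hKy, hredy, heqy⟩ := exists_reduced_word_of_mem_parab cs hy
  have hπ : π (ωx ++ ωy) = x * y := by rw [cs.wordProd_append, ← heqx, heqy]
  have hredxy : cs.IsReduced (ωx ++ ωy) := by
    show ℓ (π (ωx ++ ωy)) = (ωx ++ ωy).length
    rw [hπ, length_quot_add cs hx hy, List.length_append]
    have e1 : ℓ x = ωx.length := by rw [heqx, hredx]
    have e2 : ℓ y = ωy.length := by rw [← heqy, hredy]
    omega
  obtain ⟨α, hsubα, _, heqα⟩ := subword_of_le cs ha ωx hredx heqx.symm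
  obtain ⟨β, hsubβ, _, heqβ⟩ := subword_of_le cs hb ωy hredy heqy
  have h2 := le_of_subword cs (ωx ++ ωy) (α ++ β) hredxy (List.Sublist.append hsubα hsubβ)
  rwa [cs.wordProd_append, heqα, heqβ, hπ] at h2

lemma sur_aux {K : Set B} {x y : W} (hx : InQuot cs K x)
    (hBP : supp cs x ∩ K ⊆ DescL cs y) :
    ∀ (n : ℕ) (a b : W), ℓ a = n → le cs a x → le cs b y → b ∈ parab cs K →
    ∃ a' b', a' * b' = a * b ∧ le cs a' x ∧ InQuot cs K a' ∧ le cs b' y ∧ b' ∈ parab cs K := by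
  intro n
  induction n using Nat.strong_induction_on with
  | _ n IH =>
  intro a b hna hax hby hbK
  by_cases hq : InQuot cs K a
  · exact ⟨a, b, rfl, hax, hq, hby, hbK⟩
  · rw [InQuot] at hq
    push_neg at hq
    obtain ⟨j, hjK, hj⟩ := hq
    have hdesc : ℓ (a * σ j) < ℓ a := by
      have := cs.length_mul_simple_ne a j; omega
    have hsupp : j ∈ supp cs x := (simple_le_of_right_descent cs hdesc).trans hax
    have hdescy : ℓ (σ j * y) < ℓ y := hBP ⟨hsupp, hjK⟩
    have hb' : le cs (σ j * b) y := by
      by_cases hbj : ℓ b < ℓ (σ j * b)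
      · exact (lifting cs (ℓ y) y rfl j b hby).2 hdescy hbj
      · have hlt : ℓ (σ j * b) < ℓ b := by have := cs.length_simple_mul_ne b j; omega
        exact (le_simple_mul_left_desc cs hlt).trans hby
    have ha' : le cs (a * σ j) x := (le_of_mul_simple_lt cs hdesc).trans hax
    have hprod : (a * σ j) * (σ j * b) = a * b := by
      rw [show (a * σ j) * (σ j * b) = a * (σ j * σ j) * b by group,
        cs.simple_mul_simple_self, mul_one]
    obtain ⟨a', b', hab, h1, h2, h3, h4⟩ := IH (ℓ (a * σ j)) (by omega) (a * σ j) (σ j * b)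
      rfl ha' hb' (mul_mem (Subgroup.subset_closure ⟨j, hjK, rfl⟩) hbK)
    exact ⟨a', b', by rw [hab, hprod], h1, h2, h3, h4⟩

end BPAux

theorem stmt8 {B W : Type*} [Group W] {M : CoxeterMatrix B} (cs : CoxeterSystem M W)
    (K : Set B) (u x y : W) (hu : u = x * y)
    (hx : InQuot cs K x) (hy : y ∈ parab cs K)
    (hadd : cs.length u = cs.length x + cs.length y)
    (hBP : supp cs x ∩ K ⊆ DescL cs y) :
    ∃ F : ({a : W // le cs a x ∧ InQuot cs K a} × {b : W // le cs b y}) ≃ {z : W // le cs z u},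
      (∀ p, ((F p : W) = (p.1 : W) * (p.2 : W))) ∧
      (∀ p q, le cs (p.1 : W) (q.1 : W) → le cs (p.2 : W) (q.2 : W) → le cs (F p : W) (F q : W)) := by
  classical
  have wd : ∀ p : ({a : W // le cs a x ∧ InQuot cs K a} × {b : W // le cs b y}),
      le cs ((p.1 : W) * (p.2 : W)) u := by
    rintro ⟨⟨a, hax, haq⟩, ⟨b, hby⟩⟩
    rw [hu]
    exact BPAux.mul_le_mul_aux cs hx hy hax hby
  let f : ({a : W // le cs a x ∧ InQuot cs K a} × {b : W // le cs b y}) → {z : W // le cs z u} :=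
    fun p => ⟨(p.1 : W) * (p.2 : W), wd p⟩
  have hinj : Function.Injective f := by
    rintro ⟨⟨a, hax, haq⟩, ⟨b, hby⟩⟩ ⟨⟨a', hax', haq'⟩, ⟨b', hby'⟩⟩ hfe
    have heq : a * b = a' * b' := congrArg Subtype.val hfe
    obtain ⟨h1, h2⟩ := BPAux.quot_unique cs haq haq'
      (BPAux.mem_parab_of_le cs hy hby) (BPAux.mem_parab_of_le cs hy hby') heq
    exact Prod.ext (Subtype.ext h1) (Subtype.ext h2)
  have hsurj : Function.Surjective f := by
    rintro ⟨z, hz⟩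
    obtain ⟨ωx, hredx, heqx⟩ := cs.exists_reduced_word' x
    obtain ⟨ωy, hKy, hredy, heqy⟩ := BPAux.exists_reduced_word_of_mem_parab cs hy
    have hπ : cs.wordProd (ωx ++ ωy) = u := by
      rw [cs.wordProd_append, ← heqx, heqy, hu]
    have hredxy : cs.IsReduced (ωx ++ ωy) := by
      show cs.length (cs.wordProd (ωx ++ ωy)) = (ωx ++ ωy).length
      rw [hπ, hu, BPAux.length_quot_add cs hx hy, List.length_append]
      have e1 : cs.length x = ωx.length := by rw [heqx, hredx]
      have e2 : cs.length y = ωy.length := by rw [← heqy, hredy]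
      omega
    obtain ⟨ω', hsub, hred', heq'⟩ := BPAux.subword_of_le cs hz _ hredxy hπ
    obtain ⟨α, β, rfl, hsubα, hsubβ⟩ := List.sublist_append_iff.mp hsub
    have haα : le cs (cs.wordProd α) x := by
      have := BPAux.le_of_subword cs ωx α hredx hsubα
      rwa [← heqx] at this
    have hbβ : le cs (cs.wordProd β) y := by
      have := BPAux.le_of_subword cs ωy β hredy hsubβ
      rwa [heqy] at this
    have hβK : cs.wordProd β ∈ parab cs K :=
      BPAux.wordProd_mem_parab cs (fun i hi => hKy i (hsubβ.subset hi))
    obtain ⟨a', b', hab, h1, h2, h3, h4⟩ := BPAux.sur_aux cs hx hBP (cs.length (cs.wordProd α))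
      (cs.wordProd α) (cs.wordProd β) rfl haα hbβ hβK
    refine ⟨⟨⟨a', h1, h2⟩, ⟨b', h3⟩⟩, ?_⟩
    apply Subtype.ext
    show a' * b' = z
    rw [hab, ← cs.wordProd_append, heq']
  refine ⟨Equiv.ofBijective f ⟨hinj, hsurj⟩, fun p => rfl, ?_⟩
  rintro ⟨⟨p1, hp1x, hp1q⟩, ⟨p2, hp2⟩⟩ ⟨⟨q1, hq1x, hq1q⟩, ⟨q2, hq2⟩⟩ h12 h22
  show le cs (p1 * p2) (q1 * q2)
  exact BPAux.mul_le_mul_aux cs hq1q (BPAux.mem_parab_of_le cs hy hq2) h12 h22
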